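/- There exists a universal constant C > 0 such that for all ρ > 0 and 0 < δ < 1, the integral J(ρ,δ) := ∫_{t ∉ [1-δ, 1+δ], t ≥ 0} t^ρ e^{-ρ t} dt satisfies J(ρ,δ) ≤ C · (ρ δ²)^{-1} · exp(-ρ(1 + δ²/4)). -/

import Mathlib

open Real MeasureTheory Set

-- log bounds
lemma aux_log_one_sub {δ : ℝ} (h0 : 0 < δ) (h1 : δ < 1) :
    Real.log (1 - δ) ≤ -δ - δ^2/4 := by
  have ha : (0:ℝ) < 1 - δ/2 := by linarith
  have hd : (0:ℝ) < 1 - δ := by linarith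
  have hb : (0:ℝ) < (1 - δ)/(1 - δ/2) := by positivity
  have key : (1 - δ) = (1 - δ/2) * ((1 - δ)/(1 - δ/2)) := by
    rw [mul_comm, div_mul_cancel₀ _ ha.ne']
  rw [key, Real.log_mul ha.ne' hb.ne']
  have l1 := Real.log_le_sub_one_of_pos ha
  have l2 := Real.log_le_sub_one_of_pos hb
  have hq : ((1 - δ)/(1 - δ/2)) * (1 - δ/2) = 1 - δ := div_mul_cancel₀ _ ha.ne'
  nlinarith [sq_nonneg δ, mul_pos h0 h0]

lemma aux_log_one_add {δ : ℝ} (h0 : 0 < δ) (h1 : δ < 1) :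
    Real.log (1 + δ) ≤ δ - δ^2/4 := by
  have hx : 0 ≤ δ - δ^2/4 := by nlinarith
  have h := Real.quadratic_le_exp_of_nonneg hx
  have h2 : (1:ℝ) + δ ≤ Real.exp (δ - δ^2/4) := by
    nlinarith [mul_nonneg (mul_nonneg h0.le h0.le) (by linarith : (0:ℝ) ≤ 1 - δ),
      sq_nonneg (δ*δ)]
  calc Real.log (1 + δ) ≤ Real.log (Real.exp (δ - δ^2/4)) :=
        Real.log_le_log (by linarith) h2
    _ = δ - δ^2/4 := Real.log_exp _

-- tangent line bound: log t ≤ log a + (t-a)/a, in multiplied form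
lemma aux_log_tangent {t a : ℝ} (ht : 0 < t) (ha : 0 < a) :
    a * (Real.log t - Real.log a) ≤ t - a := by
  have := Real.log_le_sub_one_of_pos (show 0 < t/a by positivity)
  rw [Real.log_div ht.ne' ha.ne'] at this
  have h2 : a * (Real.log t - Real.log a) ≤ a * (t/a - 1) :=
    mul_le_mul_of_nonneg_left this ha.le
  have h3 : a * (t/a - 1) = t - a := by field_simp
  linarith

lemma aux_integral_exp_mul {a b c : ℝ} (hc : c ≠ 0) :
    ∫ x in a..b, Real.exp (c * x) = (Real.exp (c * b) - Real.exp (c * a)) / c := by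
  have D : ∀ x : ℝ, HasDerivAt (fun y => Real.exp (c * y) / c) (Real.exp (c * x)) x := by
    intro x
    have h1 : HasDerivAt (fun y : ℝ => c * y) c x := by
      simpa using (hasDerivAt_id x).const_mul c
    have h2 := (Real.hasDerivAt_exp (c * x)).comp x h1
    have h3 := h2.div_const c
    simpa [mul_comm, mul_div_cancel_left₀ _ hc] using h3
  rw [intervalIntegral.integral_eq_sub_of_hasDerivAt (fun x _ => D x)
    ((Real.continuous_exp.comp (continuous_const.mul continuous_id)).intervalIntegrable a b)]
  ring

-- ∫ over Ico 0 a of exp(c(t-a)) ≤ 1/c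
lemma aux_intA {a c : ℝ} (ha : 0 ≤ a) (hc : 0 < c) :
    ∫ t in Ico 0 a, Real.exp (c * (t - a)) ≤ c⁻¹ := by
  rw [MeasureTheory.integral_Ico_eq_integral_Ioo, ← MeasureTheory.integral_Ioc_eq_integral_Ioo,
    ← intervalIntegral.integral_of_le ha]
  have hrw : ∀ t : ℝ, Real.exp (c * (t - a)) = Real.exp (c * t) * Real.exp (-(c*a)) := by
    intro t; rw [← Real.exp_add]; ring_nf
  simp_rw [hrw]
  rw [intervalIntegral.integral_mul_const, aux_integral_exp_mul hc.ne']
  have h1 : Real.exp (c*a) * Real.exp (-(c*a)) = 1 := by rw [← Real.exp_add]; simp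
  have h2 := Real.exp_pos (-(c*a))
  simp only [mul_zero, Real.exp_zero]
  rw [div_mul_eq_mul_div, div_le_iff₀ hc, inv_mul_cancel₀ hc.ne']
  nlinarith

-- ∫ over Ioi b of exp(-(c(t-b))) = 1/c
lemma aux_intB {b c : ℝ} (hc : 0 < c) :
    ∫ t in Ioi b, Real.exp (-(c * (t - b))) = c⁻¹ := by
  have hrw : ∀ t : ℝ, Real.exp (-(c * (t - b))) = Real.exp (-(c * t)) * Real.exp (c*b) := by
    intro t; rw [← Real.exp_add]; ring_nf
  simp_rw [hrw]
  rw [MeasureTheory.integral_mul_const]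
  have := MeasureTheory.integral_comp_mul_left_Ioi (fun x => Real.exp (-x)) b hc
  simp only [smul_eq_mul] at this
  rw [show (fun t : ℝ => Real.exp (-(c*t))) = fun t : ℝ => Real.exp (-(c*t)) from rfl]
  rw [this, integral_exp_neg_Ioi, mul_assoc, ← Real.exp_add]
  simp

-- integrability of exp(-(c(t-b))) on Ioi b
lemma aux_intB_integrable {b c : ℝ} (hc : 0 < c) :
    IntegrableOn (fun t => Real.exp (-(c * (t - b)))) (Ioi b) := by
  have h := exp_neg_integrableOn_Ioi b hc
  have h2 : IntegrableOn (fun x => Real.exp (-c * x) * Real.exp (c*b)) (Ioi b) :=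
    h.mul_const (Real.exp (c*b))
  refine h2.congr_fun (fun t _ => ?_) measurableSet_Ioi
  dsimp only; rw [← Real.exp_add]; ring_nf

lemma aux_log_tangent' {t a : ℝ} (ht : 0 < t) (ha : 0 < a) :
    a * (Real.log t - Real.log a) ≤ t - a := by
  have h := Real.log_le_sub_one_of_pos (show 0 < t/a by positivity)
  rw [Real.log_div ht.ne' ha.ne'] at h
  have h2 : a * (Real.log t - Real.log a) ≤ a * (t/a - 1) :=
    mul_le_mul_of_nonneg_left h ha.le
  have h3 : a * (t/a - 1) = t - a := by field_simp
  linarith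

lemma aux_ptA {ρ δ t : ℝ} (hρ : 0 < ρ) (h0 : 0 < δ) (h1 : δ < 1)
    (ht0 : 0 ≤ t) (hta : t < 1 - δ) :
    t ^ ρ * Real.exp (-ρ * t) ≤
      Real.exp (ρ * (Real.log (1-δ) - (1-δ))) * Real.exp (ρ * δ * (t - (1-δ))) := by
  have hd : (0:ℝ) < 1 - δ := by linarith
  rcases eq_or_lt_of_le ht0 with h | ht
  · rw [← h, Real.zero_rpow hρ.ne', zero_mul]
    positivity
  · rw [Real.rpow_def_of_pos ht, ← Real.exp_add, ← Real.exp_add, Real.exp_le_exp]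
    have hT := aux_log_tangent' ht hd
    have hL : Real.log t - Real.log (1-δ) ≤ 0 := by
      have := Real.log_le_log ht hta.le
      linarith
    have h3 := mul_le_mul_of_nonneg_left hT (by positivity : (0:ℝ) ≤ ρ * (1+δ))
    have h4 : ρ * δ^2 * (Real.log t - Real.log (1-δ)) ≤ 0 :=
      mul_nonpos_of_nonneg_of_nonpos (by positivity) hL
    nlinarith [h3, h4]

lemma aux_ptB {ρ δ t : ℝ} (hρ : 0 < ρ) (h0 : 0 < δ) (h1 : δ < 1)
    (htb : 1 + δ < t) :
    t ^ ρ * Real.exp (-ρ * t) ≤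
      Real.exp (ρ * (Real.log (1+δ) - (1+δ))) * Real.exp (-(ρ * δ / 2 * (t - (1+δ)))) := by
  have hb0 : (0:ℝ) < 1 + δ := by linarith
  have ht : 0 < t := by linarith
  rw [Real.rpow_def_of_pos ht, ← Real.exp_add, ← Real.exp_add, Real.exp_le_exp]
  have hT := aux_log_tangent' ht hb0
  have hL : 0 ≤ Real.log t - Real.log (1+δ) := by
    have := Real.log_le_log hb0 htb.le
    linarith
  have h3 := mul_le_mul_of_nonneg_left hT
    (by nlinarith : (0:ℝ) ≤ ρ * (2-δ))
  have h4 : 0 ≤ ρ * (δ - δ^2) * (Real.log t - Real.log (1+δ)) := by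
    apply mul_nonneg _ hL
    nlinarith [mul_nonneg hρ.le (mul_nonneg h0.le (by linarith : (0:ℝ) ≤ 1 - δ))]
  nlinarith [h3, h4]

theorem tail_integral_estimate : ∃ C : ℝ, 0 < C ∧ ∀ ρ δ : ℝ, 0 < ρ → 0 < δ → δ < 1 →
    (∫ t in {t : ℝ | 0 ≤ t ∧ t ∉ Set.Icc (1 - δ) (1 + δ)}, t ^ ρ * Real.exp (-ρ * t))
      ≤ C * (ρ * δ ^ 2)⁻¹ * Real.exp (-ρ * (1 + δ ^ 2 / 4)) := by
  refine ⟨3, by norm_num, fun ρ δ hρ h0 h1 => ?_⟩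
  have hd : (0:ℝ) < 1 - δ := by linarith
  have hb0 : (0:ℝ) < 1 + δ := by linarith
  set E := Real.exp (-ρ * (1 + δ ^ 2 / 4)) with hE_def
  have hEpos : 0 < E := Real.exp_pos _
  -- set decomposition
  have hS : {t : ℝ | 0 ≤ t ∧ t ∉ Set.Icc (1-δ) (1+δ)} = Ico 0 (1-δ) ∪ Ioi (1+δ) := by
    ext t
    simp only [mem_setOf_eq, Set.mem_Icc, mem_union, mem_Ico, mem_Ioi, not_and, not_le]
    constructor
    · rintro ⟨ht0, h⟩
      by_cases hlt : t < 1 - δ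
      · exact Or.inl ⟨ht0, hlt⟩
      · exact Or.inr (h (not_lt.1 hlt))
    · rintro (⟨ht0, hlt⟩ | hgt)
      · exact ⟨ht0, fun h' => absurd hlt (not_lt.2 h')⟩
      · exact ⟨by linarith, fun _ => hgt⟩
  rw [hS]
  set f := fun t : ℝ => t ^ ρ * Real.exp (-ρ * t) with hf_def
  set K1 := Real.exp (ρ * (Real.log (1-δ) - (1-δ))) with hK1_def
  set K2 := Real.exp (ρ * (Real.log (1+δ) - (1+δ))) with hK2_def
  -- integrability of f on Ico 0 (1-δ)
  have c1 : ContinuousOn (fun t : ℝ => t ^ ρ) (Icc 0 (1-δ)) := fun t _ =>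
    (Real.continuousAt_rpow_const t ρ (Or.inr hρ.le)).continuousWithinAt
  have c2 : Continuous fun t : ℝ => Real.exp (-ρ * t) :=
    Real.continuous_exp.comp (continuous_const.mul continuous_id)
  have intA_f : IntegrableOn f (Ico 0 (1-δ)) :=
    ((c1.mul c2.continuousOn).integrableOn_Icc).mono_set Ico_subset_Icc_self
  -- g1 integrable on Ico
  have intA_g1 : IntegrableOn (fun t => K1 * Real.exp (ρ * δ * (t - (1-δ)))) (Ico 0 (1-δ)) := by
    apply Continuous.integrableOn_Icc (by continuity) |>.mono_set Ico_subset_Icc_self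
  -- g2 integrable on Ioi
  have hc2 : (0:ℝ) < ρ * δ / 2 := by positivity
  have intB_g2 : IntegrableOn (fun t => K2 * Real.exp (-(ρ * δ / 2 * (t - (1+δ))))) (Ioi (1+δ)) :=
    (aux_intB_integrable hc2).const_mul K2
  -- f ≤ g2 on Ioi, and f integrable there
  have hptB : ∀ t ∈ Ioi (1+δ), f t ≤ K2 * Real.exp (-(ρ * δ / 2 * (t - (1+δ)))) :=
    fun t ht => aux_ptB hρ h0 h1 ht
  have intB_f : IntegrableOn f (Ioi (1+δ)) := by
    apply Integrable.mono' intB_g2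
    · apply Measurable.aestronglyMeasurable
      fun_prop
    · rw [ae_restrict_iff' measurableSet_Ioi]
      refine ae_of_all _ fun t ht => ?_
      have ht' : (0:ℝ) ≤ t := by have := mem_Ioi.1 ht; linarith
      rw [Real.norm_eq_abs, abs_of_nonneg
        (mul_nonneg (Real.rpow_nonneg ht' _) (Real.exp_pos _).le)]
      exact hptB t ht
  have hptA : ∀ t ∈ Ico 0 (1-δ), f t ≤ K1 * Real.exp (ρ * δ * (t - (1-δ))) :=
    fun t ht => aux_ptA hρ h0 h1 ht.1 ht.2
  have hdisj : Disjoint (Ico (0:ℝ) (1-δ)) (Ioi (1+δ)) := by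
    rw [Set.disjoint_left]
    rintro x ⟨_, hx2⟩ hx3
    simp only [mem_Ioi] at hx3
    linarith
  rw [MeasureTheory.setIntegral_union hdisj measurableSet_Ioi intA_f intB_f]
  -- bound each piece
  have HA : ∫ t in Ico 0 (1-δ), f t ≤ E * (ρ * δ)⁻¹ := by
    calc ∫ t in Ico 0 (1-δ), f t
        ≤ ∫ t in Ico 0 (1-δ), K1 * Real.exp (ρ * δ * (t - (1-δ))) :=
          setIntegral_mono_on intA_f intA_g1 measurableSet_Ico hptA
      _ = K1 * ∫ t in Ico 0 (1-δ), Real.exp (ρ * δ * (t - (1-δ))) :=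
          MeasureTheory.integral_const_mul _ _
      _ ≤ K1 * (ρ * δ)⁻¹ := by
          apply mul_le_mul_of_nonneg_left (aux_intA hd.le (by positivity)) (Real.exp_pos _).le
      _ ≤ E * (ρ * δ)⁻¹ := by
          apply mul_le_mul_of_nonneg_right _ (by positivity)
          rw [hK1_def, hE_def, Real.exp_le_exp]
          nlinarith [mul_le_mul_of_nonneg_left (aux_log_one_sub h0 h1) hρ.le]
  have HB : ∫ t in Ioi (1+δ), f t ≤ E * (2 * (ρ * δ)⁻¹) := by
    calc ∫ t in Ioi (1+δ), f t
        ≤ ∫ t in Ioi (1+δ), K2 * Real.exp (-(ρ * δ / 2 * (t - (1+δ)))) :=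
          setIntegral_mono_on intB_f intB_g2 measurableSet_Ioi hptB
      _ = K2 * ∫ t in Ioi (1+δ), Real.exp (-(ρ * δ / 2 * (t - (1+δ)))) :=
          MeasureTheory.integral_const_mul _ _
      _ = K2 * (ρ * δ / 2)⁻¹ := by rw [aux_intB hc2]
      _ ≤ E * (2 * (ρ * δ)⁻¹) := by
          have h5 : (ρ * δ / 2)⁻¹ = 2 * (ρ * δ)⁻¹ := by
            field_simp
          rw [h5]
          apply mul_le_mul_of_nonneg_right _ (by positivity)
          rw [hK2_def, hE_def, Real.exp_le_exp]
          nlinarith [mul_le_mul_of_nonneg_left (aux_log_one_add h0 h1) hρ.le]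
  have hinv : (ρ * δ)⁻¹ ≤ (ρ * δ^2)⁻¹ := by
    apply inv_anti₀ (by positivity)
    nlinarith
  nlinarith [HA, HB, mul_le_mul_of_nonneg_left hinv hEpos.le, hEpos,
    inv_nonneg.2 (mul_pos hρ h0).le]
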